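/- arXiv:0704.0969 — 3 statements merged into one kernel-verified Lean document; each statement's English description precedes it below -/
import Mathlib

section
/- Let a : ℕ → ℕ → ℂ with ∑_{i,j} |a i j|² < ∞ and a not identically zero. Then the following are equivalent: (1) there exist square-summable sequences x, y : ℕ → ℂ with a i j = x i * conj (y j) for all i, j; (2) every 2×2 minor of a vanishes, i.e. for all i, j, k, l, a i l * a j k = a i k * a j l. -/
set_option maxHeartbeats 800000 in
theorem stmt_1 (a : ℕ → ℕ → ℂ)
    (hsum : Summable (fun p : ℕ × ℕ => ‖a p.1 p.2‖ ^ 2))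
    (hne : ∃ i j, a i j ≠ 0) :
    (∃ x y : ℕ → ℂ, Memℓp x 2 ∧ Memℓp y 2 ∧
        ∀ i j, a i j = x i * (starRingEnd ℂ) (y j)) ↔
      (∀ i j k l, a i l * a j k = a i k * a j l) := by
  have key : ∀ f : ℕ → ℂ, Summable (fun i => ‖f i‖ ^ 2) → Memℓp f 2 := by
    intro f hf
    apply memℓp_gen
    have h2 : (2 : ENNReal).toReal = 2 := by norm_num
    rw [h2]
    convert hf using 2 with i
    rw [Real.rpow_two]
  constructor
  · rintro ⟨x, y, -, -, h⟩ i j k l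
    simp only [h]; ring
  · rintro hmin
    obtain ⟨i0, j0, h0⟩ := hne
    refine ⟨fun i => a i j0, fun j => (starRingEnd ℂ) (a i0 j / a i0 j0), ?_, ?_, ?_⟩
    · exact key _ (hsum.prod_symm.prod_factor j0)
    · apply key
      have hs : Summable (fun j : ℕ => ‖a i0 j‖ ^ 2) := hsum.prod_factor i0
      have h2 : Summable (fun j : ℕ => ‖a i0 j / a i0 j0‖ ^ 2) := by
        have := hs.mul_right ((1 / ‖a i0 j0‖) ^ 2)
        apply this.congr
        intro j
        rw [norm_div]
        field_simp
      apply h2.congr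
      intro j
      simp
    · intro i j
      rw [RingHomInvPair.comp_apply_eq₂]
      have := hmin i i0 j0 j
      field_simp
      linear_combination this
end

section
/- Let a : ℕ → ℕ → ℂ be square-summable (∑_{i,j} |a i j|² < ∞), and let M be the associated bounded linear operator on ℓ²(ℕ,ℂ) defined by (M x) i = ∑ⱼ a i j * x j. Then M is a compact operator. -/
open scoped ComplexConjugate ENNReal NNReal

noncomputable section

/-- coordinate evaluation as a continuous linear map -/
def evalCLM (i : ℕ) : lp (fun _ : ℕ => ℂ) 2 →L[ℂ] ℂ :=
  LinearMap.mkContinuous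
    { toFun := fun x => x i
      map_add' := fun x y => rfl
      map_smul' := fun c x => rfl } 1
    (fun x => by show ‖(x : ∀ _ : ℕ, ℂ) i‖ ≤ 1 * ‖x‖; simpa using lp.norm_apply_le_norm (by norm_num) x i)

@[simp] lemma evalCLM_apply (i : ℕ) (x : lp (fun _ : ℕ => ℂ) 2) : evalCLM i x = x i := rfl

lemma isCompactOperator_smulRight {E F : Type*} [NormedAddCommGroup E] [NormedSpace ℂ E]
    [NormedAddCommGroup F] [NormedSpace ℂ F] (φ : E →L[ℂ] ℂ) (v : F) :
    IsCompactOperator (φ.smulRight v) := by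
  rw [isCompactOperator_iff_exists_mem_nhds_image_subset_compact]
  refine ⟨φ ⁻¹' Metric.closedBall 0 1, ?_, (fun c : ℂ => c • v) '' Metric.closedBall 0 1,
    ((isCompact_closedBall (0:ℂ) 1).image (by continuity)), ?_⟩
  · have : Metric.closedBall (0:ℂ) 1 ∈ nhds (φ 0) := by
      simpa using Metric.closedBall_mem_nhds (0:ℂ) one_pos
    exact φ.continuous.continuousAt.preimage_mem_nhds this
  · rintro _ ⟨x, hx, rfl⟩
    exact ⟨φ x, hx, rfl⟩

theorem stmt_4 (a : ℕ → ℕ → ℂ)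
    (hsum : Summable (fun p : ℕ × ℕ => ‖a p.1 p.2‖ ^ 2))
    (M : lp (fun _ : ℕ => ℂ) 2 →L[ℂ] lp (fun _ : ℕ => ℂ) 2)
    (hM : ∀ (x : lp (fun _ : ℕ => ℂ) 2) (i : ℕ),
      (M x : ∀ _ : ℕ, ℂ) i = ∑' j, a i j * (x : ∀ _ : ℕ, ℂ) j) :
    IsCompactOperator M := by
  classical
  -- rank one operators and truncations
  set R : ℕ → (lp (fun _ : ℕ => ℂ) 2 →L[ℂ] lp (fun _ : ℕ => ℂ) 2) := fun i => (evalCLM i).smulRight (lp.single 2 i 1) with hR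
  set T : Finset ℕ → (lp (fun _ : ℕ => ℂ) 2 →L[ℂ] lp (fun _ : ℕ => ℂ) 2) := fun s => ∑ i ∈ s, R i with hT
  have hRapp : ∀ i (x : lp (fun _ : ℕ => ℂ) 2), R i x = lp.single 2 i ((x : ∀ _ : ℕ, ℂ) i) := by
    intro i x
    rw [hR]
    simp only [ContinuousLinearMap.smulRight_apply, evalCLM_apply]
    rw [← lp.single_smul]
    norm_num
  have hTapp : ∀ s (x : lp (fun _ : ℕ => ℂ) 2), T s x = ∑ i ∈ s, lp.single 2 i ((x : ∀ _ : ℕ, ℂ) i) := by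
    intro s x
    rw [hT]
    simp only [ContinuousLinearMap.sum_apply]
    exact Finset.sum_congr rfl fun i _ => hRapp i x
  have hTcomp : ∀ s : Finset ℕ, IsCompactOperator (T s) := by
    intro s
    have : IsCompactOperator (∑ i ∈ s, ⇑(R i)) := by
      refine Finset.sum_induction _ _ (fun f g hf hg => hf.add hg) isCompactOperator_zero
        (fun i _ => isCompactOperator_smulRight _ _)
    simpa [hT, ContinuousLinearMap.coe_sum'] using this
  -- row sums
  set b : ℕ → ℝ := fun i => ∑' j, ‖a i j‖ ^ 2 with hb
  have hnn : 0 ≤ fun p : ℕ × ℕ => ‖a p.1 p.2‖ ^ 2 := fun p => by positivity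
  have hrow : ∀ i, Summable fun j => ‖a i j‖ ^ 2 := fun i => hsum.prod_factor i
  have hbnn : ∀ i, 0 ≤ b i := fun i => tsum_nonneg fun j => by positivity
  -- rows as l² elements
  have hmem : ∀ i, Memℓp (fun j => conj (a i j)) 2 := by
    intro i
    apply memℓp_gen
    have : (fun j => ‖conj (a i j)‖ ^ ((2:ℝ≥0∞).toReal)) = fun j => ‖a i j‖ ^ 2 := by
      funext j
      rw [RCLike.norm_conj, show ((2:ℝ≥0∞).toReal) = ((2:ℕ):ℝ) by norm_num,
        Real.rpow_natCast]
    rw [this]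
    exact hrow i
  set y : ℕ → lp (fun _ : ℕ => ℂ) 2 := fun i => ⟨_, hmem i⟩ with hy
  -- pointwise bound via Cauchy-Schwarz
  have hMx : ∀ (x : lp (fun _ : ℕ => ℂ) 2) i, (M x : ∀ _ : ℕ, ℂ) i = inner ℂ (y i) x := by
    intro x i
    rw [hM, lp.inner_eq_tsum]
    congr 1
    funext j
    rw [RCLike.inner_apply]
    simp [hy, mul_comm]
  have hynorm : ∀ i, ‖y i‖ ^ 2 = b i := by
    intro i
    have h2 : (0:ℝ) < (2:ℝ≥0∞).toReal := by norm_num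
    have := lp.norm_rpow_eq_tsum h2 (y i)
    rw [show ((2:ℝ≥0∞).toReal) = ((2:ℕ):ℝ) by norm_num] at this
    rw [Real.rpow_natCast] at this
    rw [this, hb]
    refine tsum_congr fun j => ?_
    show ‖conj (a i j)‖ ^ ((2:ℕ):ℝ) = ‖a i j‖ ^ 2
    rw [RCLike.norm_conj, Real.rpow_natCast]
  have hptbound : ∀ (x : lp (fun _ : ℕ => ℂ) 2) i, ‖(M x : ∀ _ : ℕ, ℂ) i‖ ^ 2 ≤ b i * ‖x‖ ^ 2 := by
    intro x i
    rw [hMx x i]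
    calc ‖(inner ℂ (y i) x : ℂ)‖ ^ 2 ≤ (‖y i‖ * ‖x‖) ^ 2 := by
          have := norm_inner_le_norm (𝕜 := ℂ) (y i) x
          exact pow_le_pow_left₀ (norm_nonneg _) this 2
      _ = b i * ‖x‖ ^ 2 := by rw [mul_pow, hynorm]
  -- the remainder estimate
  set t : Finset ℕ → ℝ := fun s => ∑' i : {n // n ∉ s}, b i with ht
  have htnn : ∀ s, 0 ≤ t s := fun s => tsum_nonneg fun i => hbnn i
  have hkey : ∀ (s : Finset ℕ) (x : lp (fun _ : ℕ => ℂ) 2), ‖(M - (T s).comp M) x‖ ≤ Real.sqrt (t s) * ‖x‖ := by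
    intro s x
    have h2 : (0:ℝ) < (2:ℝ≥0∞).toReal := by norm_num
    have hHS : HasSum (fun i => ‖(M x : ∀ _ : ℕ, ℂ) i‖ ^ (2:ℝ≥0∞).toReal)
        (‖M x‖ ^ (2:ℝ≥0∞).toReal) := lp.hasSum_norm h2 (M x)
    have hsq : ‖(M - (T s).comp M) x‖ ^ (2:ℝ≥0∞).toReal =
        ‖M x‖ ^ (2:ℝ≥0∞).toReal - ∑ i ∈ s, ‖(M x : ∀ _ : ℕ, ℂ) i‖ ^ (2:ℝ≥0∞).toReal := by
      have : (M - (T s).comp M) x = M x - ∑ i ∈ s, lp.single 2 i ((M x : ∀ _ : ℕ, ℂ) i) := by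
        rw [ContinuousLinearMap.sub_apply, ContinuousLinearMap.comp_apply, hTapp]
      rw [this]
      exact lp.norm_compl_sum_single h2 (M x) s
    have hcompl : ‖M x‖ ^ (2:ℝ≥0∞).toReal - ∑ i ∈ s, ‖(M x : ∀ _ : ℕ, ℂ) i‖ ^ (2:ℝ≥0∞).toReal =
        ∑' i : ↑((s : Set ℕ)ᶜ), ‖(M x : ∀ _ : ℕ, ℂ) ↑i‖ ^ (2:ℝ≥0∞).toReal := by
      have h := Summable.sum_add_tsum_compl (s := s) hHS.summable
      rw [hHS.tsum_eq] at h
      linarith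
    have hle : (∑' i : ↑((s : Set ℕ)ᶜ), ‖(M x : ∀ _ : ℕ, ℂ) ↑i‖ ^ (2:ℝ≥0∞).toReal)
        ≤ t s * ‖x‖ ^ 2 := by
      have hsummable : Summable fun i : ↑((s : Set ℕ)ᶜ) =>
          ‖(M x : ∀ _ : ℕ, ℂ) ↑i‖ ^ (2:ℝ≥0∞).toReal :=
        hHS.summable.subtype _
      have hbsub : Summable fun i : ↑((s : Set ℕ)ᶜ) => b ↑i * ‖x‖ ^ 2 := by
        have hbs : Summable b := (summable_prod_of_nonneg hnn).mp hsum |>.2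
        exact (hbs.subtype _).mul_right _
      have hts : t s * ‖x‖ ^ 2 = ∑' i : ↑((s : Set ℕ)ᶜ), b ↑i * ‖x‖ ^ 2 := by
        rw [ht, ← tsum_mul_right]
        rfl
      rw [hts]
      refine Summable.tsum_le_tsum (fun i => ?_) hsummable hbsub
      have := hptbound x i
      calc ‖(M x : ∀ _ : ℕ, ℂ) ↑i‖ ^ (2:ℝ≥0∞).toReal
          = ‖(M x : ∀ _ : ℕ, ℂ) ↑i‖ ^ 2 := by
            rw [show ((2:ℝ≥0∞).toReal) = ((2:ℕ):ℝ) by norm_num, Real.rpow_natCast]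
        _ ≤ b ↑i * ‖x‖ ^ 2 := hptbound x i
    have hfinal : ‖(M - (T s).comp M) x‖ ^ 2 ≤ t s * ‖x‖ ^ 2 := by
      have := hsq.trans hcompl
      rw [show ((2:ℝ≥0∞).toReal) = ((2:ℕ):ℝ) by norm_num, Real.rpow_natCast] at this
      rw [this]
      exact hle
    calc ‖(M - (T s).comp M) x‖ = Real.sqrt (‖(M - (T s).comp M) x‖ ^ 2) := by
          rw [Real.sqrt_sq (norm_nonneg _)]
      _ ≤ Real.sqrt (t s * ‖x‖ ^ 2) := Real.sqrt_le_sqrt hfinal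
      _ = Real.sqrt (t s) * ‖x‖ := by
          rw [Real.sqrt_mul (htnn s), Real.sqrt_sq (norm_nonneg _)]
  have hopnorm : ∀ s : Finset ℕ, ‖M - (T s).comp M‖ ≤ Real.sqrt (t s) :=
    fun s => ContinuousLinearMap.opNorm_le_bound _ (Real.sqrt_nonneg _) (hkey s)
  -- convergence
  have htzero : Filter.Tendsto t Filter.atTop (nhds 0) := tendsto_tsum_compl_atTop_zero b
  have hsqrtzero : Filter.Tendsto (fun s => Real.sqrt (t s)) Filter.atTop (nhds 0) := by
    have := (Real.continuous_sqrt.tendsto 0).comp htzero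
    simpa [Function.comp_def] using this
  have hnormzero : Filter.Tendsto (fun s => ‖(T s).comp M - M‖) Filter.atTop (nhds 0) := by
    refine squeeze_zero (fun s => norm_nonneg _) (fun s => ?_) hsqrtzero
    rw [norm_sub_rev]
    exact hopnorm s
  have htend : Filter.Tendsto (fun s => (T s).comp M) Filter.atTop (nhds M) :=
    tendsto_iff_norm_sub_tendsto_zero.2 hnormzero
  refine isCompactOperator_of_tendsto htend (Filter.Eventually.of_forall fun s => ?_)
  have : IsCompactOperator (⇑(T s) ∘ ⇑M) := (hTcomp s).comp_clm M
  simpa [ContinuousLinearMap.coe_comp'] using this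
end
end

section
/- Let a : ℕ → ℕ → ℂ satisfy ∑_{i,j} |a i j|² = 1, and suppose all 2×2 minors of a vanish. Then there exist unit vectors x, y ∈ ℓ²(ℕ,ℂ) such that a i j = x i * conj (y j) for all i, j. -/
theorem stmt_19 (a : ℕ → ℕ → ℂ)
    (hsum : Summable (fun p : ℕ × ℕ => ‖a p.1 p.2‖ ^ 2))
    (hnorm : ∑' i, ∑' j, ‖a i j‖ ^ 2 = 1)
    (hminor : ∀ i j k l, a i l * a j k = a i k * a j l) :
    ∃ x y : ℕ → ℂ, Memℓp x 2 ∧ Memℓp y 2 ∧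
      (∑' i, ‖x i‖ ^ 2 = 1) ∧ (∑' j, ‖y j‖ ^ 2 = 1) ∧
      ∀ i j, a i j = x i * (starRingEnd ℂ) (y j) := by
  -- find a nonzero entry
  obtain ⟨i₀, j₀, hc⟩ : ∃ i j, a i j ≠ 0 := by
    by_contra h
    push_neg at h
    simp [h] at hnorm
  set c := a i₀ j₀ with hc_def
  have hcne : c ≠ 0 := hc
  have hcn : (0:ℝ) < ‖c‖ ^ 2 := pow_pos (norm_pos_iff.mpr hcne) 2
  -- summability of row and column
  have hS1 : Summable fun i => ‖a i j₀‖ ^ 2 := hsum.prod_symm.prod_factor j₀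
  have hS2 : Summable fun j => ‖a i₀ j‖ ^ 2 := hsum.prod_factor i₀
  set S₁ := ∑' i, ‖a i j₀‖ ^ 2 with hS1def
  set S₂ := ∑' j, ‖a i₀ j‖ ^ 2 with hS2def
  have hS1pos : 0 < S₁ :=
    Summable.tsum_pos hS1 (fun i => by positivity) i₀ (by positivity)
  have hS2pos : 0 < S₂ :=
    Summable.tsum_pos hS2 (fun j => by positivity) j₀ (by positivity)
  -- key pointwise identity
  have hkey : ∀ i j, ‖a i j‖ ^ 2 = ‖a i j₀‖ ^ 2 * ‖a i₀ j‖ ^ 2 / ‖c‖ ^ 2 := by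
    intro i j
    have h := hminor i i₀ j₀ j
    have hn : ‖a i j‖ * ‖c‖ = ‖a i j₀‖ * ‖a i₀ j‖ := by
      rw [← norm_mul, ← norm_mul, h]
    have hn2 : ‖a i j‖ ^ 2 * ‖c‖ ^ 2 = ‖a i j₀‖ ^ 2 * ‖a i₀ j‖ ^ 2 := by
      have := congrArg (· ^ 2) hn
      simpa [mul_pow] using this
    rw [eq_div_iff (ne_of_gt hcn)]
    exact hn2
  -- compute the double sum
  have hprod : S₁ * S₂ = ‖c‖ ^ 2 := by
    have hrow : ∀ i, ∑' j, ‖a i j‖ ^ 2 = ‖a i j₀‖ ^ 2 * S₂ / ‖c‖ ^ 2 := by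
      intro i
      calc ∑' j, ‖a i j‖ ^ 2 = ∑' j, ‖a i j₀‖ ^ 2 / ‖c‖ ^ 2 * ‖a i₀ j‖ ^ 2 := by
            apply tsum_congr; intro j; rw [hkey i j]; ring
        _ = ‖a i j₀‖ ^ 2 / ‖c‖ ^ 2 * S₂ := tsum_mul_left
        _ = ‖a i j₀‖ ^ 2 * S₂ / ‖c‖ ^ 2 := by ring
    have hdd : ∑' i, ∑' j, ‖a i j‖ ^ 2 = S₁ * S₂ / ‖c‖ ^ 2 := by
      calc ∑' i, ∑' j, ‖a i j‖ ^ 2 = ∑' i, S₂ / ‖c‖ ^ 2 * ‖a i j₀‖ ^ 2 := by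
            apply tsum_congr; intro i; rw [hrow i]; ring
        _ = S₂ / ‖c‖ ^ 2 * S₁ := tsum_mul_left
        _ = S₁ * S₂ / ‖c‖ ^ 2 := by ring
    have h1 : S₁ * S₂ / ‖c‖ ^ 2 = 1 := by rw [← hdd, hnorm]
    rwa [div_eq_one_iff_eq (ne_of_gt hcn)] at h1
  set t : ℝ := Real.sqrt S₁ with ht
  have htpos : 0 < t := Real.sqrt_pos.mpr hS1pos
  have ht2 : t ^ 2 = S₁ := Real.sq_sqrt hS1pos.le
  have hnt : ‖((t:ℝ) : ℂ)‖ = t := by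
    rw [Complex.norm_real, Real.norm_of_nonneg htpos.le]
  have hxeq : (fun i => ‖a i j₀ / (t : ℂ)‖ ^ 2) = fun i => (1 / t ^ 2) * ‖a i j₀‖ ^ 2 := by
    funext i
    rw [norm_div, hnt, div_pow]
    ring
  have hyeq : (fun j => ‖(starRingEnd ℂ) (a i₀ j) * ((t : ℂ) / (starRingEnd ℂ) c)‖ ^ 2)
      = fun j => (t ^ 2 / ‖c‖ ^ 2) * ‖a i₀ j‖ ^ 2 := by
    funext j
    rw [norm_mul, norm_div, hnt, RCLike.norm_conj, RCLike.norm_conj, mul_pow, div_pow]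
    ring
  refine ⟨fun i => a i j₀ / (t : ℂ),
    fun j => (starRingEnd ℂ) (a i₀ j) * ((t : ℂ) / (starRingEnd ℂ) c), ?_, ?_, ?_, ?_, ?_⟩
  · apply memℓp_gen
    have h2 : (2 : ENNReal).toReal = ((2 : ℕ) : ℝ) := by norm_num
    rw [h2]
    simp_rw [Real.rpow_natCast]
    rw [hxeq]
    exact hS1.mul_left _
  · apply memℓp_gen
    have h2 : (2 : ENNReal).toReal = ((2 : ℕ) : ℝ) := by norm_num
    rw [h2]
    simp_rw [Real.rpow_natCast]
    rw [hyeq]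
    exact hS2.mul_left _
  · rw [hxeq, tsum_mul_left, ← hS1def, ht2]
    field_simp
  · rw [hyeq, tsum_mul_left, ← hS2def, ht2]
    rw [div_mul_eq_mul_div, hprod, div_self (ne_of_gt hcn)]
  · intro i j
    have h := hminor i i₀ j₀ j
    have htc : (t : ℂ) ≠ 0 := by exact_mod_cast htpos.ne'
    rw [map_mul, map_div₀, Complex.conj_conj, Complex.conj_conj, Complex.conj_ofReal]
    field_simp
    linear_combination h
end
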